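/- The function q is differentiable on (0,∞) and satisfies t·q′(t) ≤ q(t) for every t > 0. (This is the inequality F_{ω,η}(t) ≥ F′_{ω,η}(t)·t established in the proof of Proposition 4.2, where F_{ω,η}(t) = p_t(ω,η).) -/

import Mathlib

open Filter Set

/-- Kigami's off-diagonal heat kernel `q(t) = p_t(ω,η)` at confluence level `N`, in sequence
form: `q(t) = ∑_{n=0}^N (1/H(n))·(exp(−t/D(n−1)) − exp(−t/D(n)))`, with the convention
`exp(−t/D(−1)) := 1`. -/
noncomputable def qfun (H D : ℕ → ℝ) (N : ℕ) (t : ℝ) : ℝ :=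
  ∑ n ∈ Finset.range (N + 1),
    (1 / H n) * ((if n = 0 then 1 else Real.exp (-t / D (n - 1))) - Real.exp (-t / D n))

lemma expterm_hasDerivAt (c t : ℝ) :
    HasDerivAt (fun s : ℝ => Real.exp (-s / c)) (-(1 / c) * Real.exp (-t / c)) t := by
  have h1 : HasDerivAt (fun s : ℝ => -s / c) (-(1 / c)) t := by
    simpa [neg_div] using ((hasDerivAt_id t).div_const c).fun_neg
  simpa [mul_comm] using h1.exp

lemma key_ineq {x y : ℝ} (hx : 0 ≤ x) (hxy : x ≤ y) :
    (1 + y) * Real.exp (-y) ≤ (1 + x) * Real.exp (-x) := by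
  have hE : Real.exp (-x) = Real.exp (y - x) * Real.exp (-y) := by
    rw [← Real.exp_add]; ring_nf
  have h1 : (1 + y) ≤ (1 + x) * Real.exp (y - x) := by
    nlinarith [mul_nonneg (by linarith : (0:ℝ) ≤ 1 + x)
      (by linarith [Real.add_one_le_exp (y - x)] :
        (0:ℝ) ≤ Real.exp (y - x) - (y - x + 1)),
      mul_nonneg hx (sub_nonneg.mpr hxy)]
  calc (1 + y) * Real.exp (-y) ≤ (1 + x) * Real.exp (y - x) * Real.exp (-y) :=
        mul_le_mul_of_nonneg_right h1 (Real.exp_pos (-y)).le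
    _ = (1 + x) * Real.exp (-x) := by rw [hE]; ring

/-- inequality `F_{ω,η}(t) ≥ F′_{ω,η}(t)·t` in the proof of Proposition 4.2:
`q` is differentiable on `(0,∞)` and `t·q′(t) ≤ q(t)` for every `t > 0`. -/
theorem stmt8 (N : ℕ) (H D : ℕ → ℝ)
    (hH_anti : Antitone H) (hH0 : H 0 = 1) (hH_pos : ∀ n ≤ N, 0 < H n)
    (hD_anti : StrictAnti D) (hD_pos : ∀ n ≤ N, 0 < D n) :
    (∀ t ∈ Ioi (0 : ℝ), DifferentiableAt ℝ (qfun H D N) t) ∧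
    ∀ t ∈ Ioi (0 : ℝ), t * deriv (qfun H D N) t ≤ qfun H D N t := by
  have hterm : ∀ n : ℕ, ∀ t : ℝ, HasDerivAt
      (fun s => (1 / H n) * ((if n = 0 then 1 else Real.exp (-s / D (n - 1)))
        - Real.exp (-s / D n)))
      ((1 / H n) * ((if n = 0 then 0 else -(1 / D (n - 1)) * Real.exp (-t / D (n - 1)))
        - (-(1 / D n) * Real.exp (-t / D n)))) t := by
    intro n t
    refine HasDerivAt.const_mul _ (HasDerivAt.sub ?_ (expterm_hasDerivAt _ t))
    by_cases h : n = 0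
    · simpa [h] using hasDerivAt_const t (1 : ℝ)
    · simpa [h] using expterm_hasDerivAt (D (n - 1)) t
  have hderiv : ∀ t : ℝ, HasDerivAt (qfun H D N)
      (∑ n ∈ Finset.range (N + 1),
        (1 / H n) * ((if n = 0 then 0 else -(1 / D (n - 1)) * Real.exp (-t / D (n - 1)))
          - (-(1 / D n) * Real.exp (-t / D n)))) t := by
    intro t
    exact HasDerivAt.fun_sum fun n _ => hterm n t
  constructor
  · exact fun t _ => (hderiv t).differentiableAt
  · intro t ht
    have ht' : (0 : ℝ) < t := ht
    rw [(hderiv t).deriv, qfun, Finset.mul_sum]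
    apply Finset.sum_le_sum
    intro n hn
    have hn' : n ≤ N := Finset.mem_range_succ_iff.mp hn
    have hHn : (0 : ℝ) ≤ 1 / H n := le_of_lt (div_pos one_pos (hH_pos n hn'))
    have hDn : (0 : ℝ) < D n := hD_pos n hn'
    have inner : t * ((if n = 0 then 0 else -(1 / D (n - 1)) * Real.exp (-t / D (n - 1)))
        - (-(1 / D n) * Real.exp (-t / D n)))
        ≤ (if n = 0 then 1 else Real.exp (-t / D (n - 1))) - Real.exp (-t / D n) := by
      by_cases h : n = 0
      · subst h
        simp only [↓reduceIte, neg_div]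
        have hk := key_ineq (x := 0) (y := t / D 0) le_rfl
          (le_of_lt (div_pos ht' hDn))
        simp only [Real.exp_zero, neg_zero, add_zero, mul_one] at hk
        set E := Real.exp (-(t / D 0)) with hE
        rw [← mul_one_div t (D 0)] at hk
        nlinarith [hk]
      · simp only [if_neg h, neg_div]
        have hp1 : n - 1 < n := Nat.sub_lt (Nat.pos_of_ne_zero h) one_pos
        have hDp : D n < D (n - 1) := hD_anti hp1
        have hDp0 : (0 : ℝ) < D (n - 1) := lt_trans hDn hDp
        have hk := key_ineq (x := t / D (n - 1)) (y := t / D n)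
          (le_of_lt (div_pos ht' hDp0)) (by gcongr)
        set Ep := Real.exp (-(t / D (n - 1))) with hEp
        set En := Real.exp (-(t / D n)) with hEn
        rw [← mul_one_div t (D (n - 1)), ← mul_one_div t (D n)] at hk
        nlinarith [hk]
    calc t * ((1 / H n) * ((if n = 0 then 0 else -(1 / D (n - 1)) * Real.exp (-t / D (n - 1)))
          - (-(1 / D n) * Real.exp (-t / D n))))
        = (1 / H n) * (t * ((if n = 0 then 0 else -(1 / D (n - 1)) * Real.exp (-t / D (n - 1)))
          - (-(1 / D n) * Real.exp (-t / D n)))) := by ring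
      _ ≤ (1 / H n) * ((if n = 0 then 1 else Real.exp (-t / D (n - 1)))
          - Real.exp (-t / D n)) := mul_le_mul_of_nonneg_left inner hHn
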